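/- A non-decreasing function v : 2^M → ℝ≥0 is submodular (i.e., v(S ∪ {g}) − v(S) ≥ v(T ∪ {g}) − v(T) for all S ⊆ T ⊆ M and g ∉ T) if and only if for all S, T ⊆ M, v(T) ≤ v(S) + Σ_{g ∈ T \ S} (v(S ∪ {g}) − v(S)). -/
import Mathlib


/-- Nemhauser–Wolsey–Fisher characterization: a non-decreasing valuation `v` is submodular
iff `v T ≤ v S + ∑_{g ∈ T \ S} (v (S ∪ {g}) − v S)` for all `S, T`. -/
theorem submodular_iff_nwf {G : Type*} [DecidableEq G] (v : Finset G → ℝ)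
    (hnn : ∀ S, 0 ≤ v S)
    (hmono : ∀ S T : Finset G, S ⊆ T → v S ≤ v T) :
    (∀ S T : Finset G, ∀ g, S ⊆ T → g ∉ T →
        v (insert g T) - v T ≤ v (insert g S) - v S) ↔
      (∀ S T : Finset G, v T ≤ v S + ∑ g ∈ T \ S, (v (insert g S) - v S)) := by
  constructor
  · intro h
    have key : ∀ n (S T : Finset G), (T \ S).card = n →
        v T ≤ v S + ∑ g ∈ T \ S, (v (insert g S) - v S) := by
      intro n
      induction n using Nat.strong_induction_on with
      | _ n ih =>
        intro S T hcard
        by_cases hTS : T ⊆ S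
        · rw [Finset.sdiff_eq_empty_iff_subset.mpr hTS, Finset.sum_empty, add_zero]
          exact hmono T S hTS
        · obtain ⟨g, hg⟩ := Finset.not_subset.mp hTS
          obtain ⟨hgT, hgS⟩ := hg
          have hgmem : g ∈ T \ S := Finset.mem_sdiff.mpr ⟨hgT, hgS⟩
          have hsd : T \ insert g S = (T \ S).erase g := by
            rw [Finset.sdiff_insert]
          have hlt : (T \ insert g S).card < n := by
            rw [hsd, Finset.card_erase_of_mem hgmem, hcard]
            exact Nat.sub_lt (by rw [← hcard]; exact Finset.card_pos.mpr ⟨g, hgmem⟩)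
              one_pos
          have h1 := ih _ hlt (insert g S) T rfl
          have h2 : ∑ g' ∈ T \ insert g S, (v (insert g' (insert g S)) - v (insert g S))
              ≤ ∑ g' ∈ T \ insert g S, (v (insert g' S) - v S) := by
            apply Finset.sum_le_sum
            intro g' hg'
            exact h S (insert g S) g' (Finset.subset_insert _ _)
              (Finset.mem_sdiff.mp hg').2
          have h3 : ∑ g' ∈ T \ S, (v (insert g' S) - v S)
              = (v (insert g S) - v S) + ∑ g' ∈ (T \ S).erase g, (v (insert g' S) - v S) := by
            conv_lhs => rw [← Finset.insert_erase hgmem]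
            rw [Finset.sum_insert (Finset.notMem_erase g _)]
          rw [h3, ← hsd]
          linarith
    intro S T
    exact key _ S T rfl
  · intro h
    -- one-step submodularity
    have step : ∀ (S : Finset G) (g hh : G), g ∉ S → hh ∉ S → g ≠ hh →
        v (insert g (insert hh S)) - v (insert hh S) ≤ v (insert g S) - v S := by
      intro S g hh hgS hhS hne
      have hT := h S (insert g (insert hh S))
      have hset : insert g (insert hh S) \ S = {g, hh} := by
        ext x
        simp only [Finset.mem_sdiff, Finset.mem_insert, Finset.mem_singleton]
        constructor
        · rintro ⟨hx | hx | hx, hxS⟩ <;> tauto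
        · rintro (rfl | rfl) <;> simp [hgS, hhS]
      rw [hset, Finset.sum_pair hne] at hT
      linarith
    intro S T g hST hgT
    -- strong induction on card of T \ S
    have key : ∀ n (S T : Finset G), (T \ S).card = n → S ⊆ T → g ∉ T →
        v (insert g T) - v T ≤ v (insert g S) - v S := by
      intro n
      induction n using Nat.strong_induction_on with
      | _ n ih =>
        intro S T hcard hST hgT
        by_cases hTS : T ⊆ S
        · have : S = T := Finset.Subset.antisymm hST hTS
          rw [this]
        · obtain ⟨a, haT, haS⟩ := Finset.not_subset.mp hTS
          have hamem : a ∈ T \ S := Finset.mem_sdiff.mpr ⟨haT, haS⟩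
          set T' := T.erase a with hT'
          have hST' : S ⊆ T' := fun x hx =>
            Finset.mem_erase.mpr ⟨fun hxa => haS (hxa ▸ hx), hST hx⟩
          have hgT' : g ∉ T' := fun hx => hgT (Finset.mem_of_mem_erase hx)
          have hcard' : (T' \ S).card < n := by
            have : T' \ S = (T \ S).erase a := by
              rw [hT', Finset.erase_sdiff_comm]
            rw [this, Finset.card_erase_of_mem hamem, hcard]
            exact Nat.sub_lt (by rw [← hcard]; exact Finset.card_pos.mpr ⟨a, hamem⟩)
              one_pos
          have hTeq : T = insert a T' := (Finset.insert_erase haT).symm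
          have h1 : v (insert g (insert a T')) - v (insert a T')
              ≤ v (insert g T') - v T' :=
            step T' g a hgT' (Finset.notMem_erase a T) (fun hga => hgT (hga ▸ haT))
          have h2 := ih _ hcard' S T' rfl hST' hgT'
          rw [hTeq]
          linarith
    exact key _ S T rfl hST hgT
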